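/- Let n be a prime number, let a_1, a_2, ... be any sequence of integers, and let k be an integer with 1 ≤ k ≤ n - 1. Then k divides F^Δ(n,k), where F^Δ(n,k) = Σ_{λ_1+...+λ_k=n, λ_i>0} a_{λ_1} a_{λ_2} ... a_{λ_k} is the sum, over all ordered compositions of n into exactly k positive parts, of the products of the corresponding terms of the sequence. -/

import Mathlib

lemma free_dvd {α : Type*} [DecidableEq α] (k : ℕ) (hk : 0 < k) (e : α → α) (f : α → ℤ)
    (s : Finset α)
    (hes : ∀ x ∈ s, e x ∈ s)
    (hf : ∀ x ∈ s, f (e x) = f x)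
    (hord : ∀ x ∈ s, e^[k] x = x)
    (hfree : ∀ x ∈ s, ∀ j, 0 < j → j < k → e^[j] x ≠ x) :
    (k : ℤ) ∣ ∑ x ∈ s, f x := by
  induction s using Finset.strongInduction with
  | _ s ih =>
  rcases s.eq_empty_or_nonempty with rfl | ⟨x, hx⟩
  · simp
  · have hiter : ∀ j, e^[j] x ∈ s := by
      intro j; induction j with
      | zero => simpa using hx
      | succ j ihj => rw [Function.iterate_succ_apply']; exact hes _ ihj
    have hfiter : ∀ j, f (e^[j] x) = f x := by
      intro j; induction j with
      | zero => simp
      | succ j ihj => rw [Function.iterate_succ_apply', hf _ (hiter j), ihj]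
    set O : Finset α := (Finset.range k).image (fun j => e^[j] x) with hO
    have hinj : Set.InjOn (fun j => e^[j] x) (Finset.range k) := by
      intro i hi j hj hij
      simp only [Finset.coe_range, Set.mem_Iio] at hi hj
      by_contra hne
      have main : ∀ i j : ℕ, i < j → j < k → e^[i] x = e^[j] x → False := by
        intro i j h hjk hij
        have key : e^[j - i] (e^[i] x) = e^[i] x := by
          rw [← Function.iterate_add_apply]
          have hji : j - i + i = j := by omega
          rw [hji]; exact hij.symm
        exact hfree _ (hiter i) (j - i) (by omega) (by omega) key
      rcases lt_trichotomy i j with h | h | h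
      · exact absurd hij (fun q => main i j h hj q)
      · exact absurd h hne
      · exact absurd hij.symm (fun q => main j i h hi q)
    have hOsub : O ⊆ s := by
      intro y hy
      simp only [hO, Finset.mem_image] at hy
      obtain ⟨j, _, rfl⟩ := hy
      exact hiter j
    have hsumO : ∑ y ∈ O, f y = (k : ℤ) * f x := by
      rw [hO, Finset.sum_image hinj]
      simp [hfiter, mul_comm]
    have hxO : x ∈ O := by
      simp only [hO, Finset.mem_image]
      exact ⟨0, Finset.mem_range.2 hk, rfl⟩
    have hssub : s \ O ⊂ s := by
      refine Finset.sdiff_ssubset ?_ ?_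
      · exact hOsub
      · exact ⟨x, hxO⟩
    have hmaps : ∀ y ∈ s \ O, e y ∈ s \ O := by
      intro y hy
      rw [Finset.mem_sdiff] at hy ⊢
      obtain ⟨hys, hyO⟩ := hy
      refine ⟨hes _ hys, ?_⟩
      intro hey
      simp only [hO, Finset.mem_image, Finset.mem_range] at hey
      obtain ⟨j, hjk, hj⟩ := hey
      have hy' : y = e^[k - 1] (e y) := by
        rw [← Function.iterate_succ_apply, Nat.succ_eq_add_one,
          (show k - 1 + 1 = k by omega), hord _ hys]
      apply hyO
      rw [hy', ← hj, ← Function.iterate_add_apply]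
      simp only [hO, Finset.mem_image, Finset.mem_range]
      rcases Nat.eq_zero_or_pos j with rfl | hj0
      · exact ⟨k - 1, by omega, by norm_num⟩
      · refine ⟨j - 1, by omega, ?_⟩
        have h3 : k - 1 + j = k + (j - 1) := by omega
        rw [h3, Function.iterate_add_apply]
        exact (hord _ (hiter (j - 1))).symm
    have hdvd2 : (k : ℤ) ∣ ∑ y ∈ s \ O, f y :=
      ih _ hssub hmaps (fun y hy => hf y (Finset.mem_sdiff.1 hy).1)
        (fun y hy => hord y (Finset.mem_sdiff.1 hy).1)
        (fun y hy => hfree y (Finset.mem_sdiff.1 hy).1)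
    have := Finset.sum_sdiff hOsub (f := f)
    rw [← this, hsumO]
    exact dvd_add hdvd2 ⟨f x, rfl⟩

/-- The compositae `F^Δ(n,k)`: the sum over all ordered compositions of `n` into
exactly `k` positive parts of the products `a (λ 1) * ... * a (λ k)`. -/
def compositae (a : ℕ → ℤ) (n k : ℕ) : ℤ :=
  ∑ c ∈ (Finset.Nat.antidiagonalTuple k n).filter (fun c => ∀ i, 0 < c i),
    ∏ i, a (c i)

open Fin.NatCast Fin.CommRing

/-- If `n` is prime and `1 ≤ k ≤ n - 1`, then for any integer sequence `a`,
`k` divides `F^Δ(n,k)`. -/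
theorem stmt_4 (a : ℕ → ℤ) (n k : ℕ) (hn : n.Prime) (hk1 : 1 ≤ k) (hkn : k ≤ n - 1) :
    (k : ℤ) ∣ compositae a n k := by
  obtain ⟨m, rfl⟩ : ∃ m, k = m + 1 := ⟨k - 1, by omega⟩
  have hn2 : 2 ≤ n := hn.two_le
  have hkltn : m + 1 < n := by omega
  set e : (Fin (m+1) → ℕ) → (Fin (m+1) → ℕ) := fun c i => c (i + 1) with hedef
  set s := (Finset.Nat.antidiagonalTuple (m+1) n).filter (fun c => ∀ i, 0 < c i) with hs
  -- iterate formula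
  have hiterform : ∀ (j : ℕ) (c : Fin (m+1) → ℕ) (i : Fin (m+1)),
      e^[j] c i = c (i + (j : Fin (m+1))) := by
    intro j
    induction j with
    | zero => intro c i; simp
    | succ j ihj =>
      intro c i
      rw [Function.iterate_succ_apply, ihj]
      simp only [hedef]
      congr 1
      push_cast
      ring
  -- rotation preserves sum
  have hsumrot : ∀ c : Fin (m+1) → ℕ, ∑ i, e c i = ∑ i, c i := by
    intro c
    exact Fintype.sum_equiv (Equiv.addRight (1 : Fin (m+1))) _ _ (fun i => rfl)
  have hes : ∀ c ∈ s, e c ∈ s := by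
    intro c hc
    simp only [hs, Finset.mem_filter, Finset.Nat.mem_antidiagonalTuple] at hc ⊢
    exact ⟨by rw [hsumrot]; exact hc.1, fun i => hc.2 _⟩
  have hf : ∀ c ∈ s, (∏ i, a (e c i)) = ∏ i, a (c i) := by
    intro c _
    exact Fintype.prod_equiv (Equiv.addRight (1 : Fin (m+1))) _ _ (fun i => rfl)
  have hord : ∀ c ∈ s, e^[m+1] c = c := by
    intro c _
    funext i
    rw [hiterform, Fin.natCast_self, add_zero]
  have hfree : ∀ c ∈ s, ∀ j, 0 < j → j < m + 1 → e^[j] c ≠ c := by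
    intro c hc j hj0 hjk hfix
    simp only [hs, Finset.mem_filter, Finset.Nat.mem_antidiagonalTuple] at hc
    obtain ⟨hcn, _⟩ := hc
    -- periodicity
    set P : ℕ → Prop := fun t => ∀ i : Fin (m+1), c (i + (t : Fin (m+1))) = c i with hP
    have hPj : P j := by
      intro i
      conv_rhs => rw [← hfix]
      rw [hiterform]
    have hPK : P (m+1) := by intro i; rw [Fin.natCast_self, add_zero]
    have hPadd : ∀ t u, P t → P u → P (t + u) := by
      intro t u ht hu i
      have : ((t + u : ℕ) : Fin (m+1)) = (t : Fin (m+1)) + u := by push_cast; ring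
      rw [this, ← add_assoc, hu, ht]
    have hPmul : ∀ q t, P t → P (q * t) := by
      intro q t ht
      induction q with
      | zero => intro i; simp
      | succ q ihq =>
        have : (q + 1) * t = q * t + t := by ring
        rw [this]
        exact hPadd _ _ ihq ht
    have hPmod : ∀ t u, P t → P u → P (u % t) := by
      intro t u ht hu i
      have h1 : u % t + u / t * t = u := Nat.mod_add_div' u t
      have h2 := hPmul (u / t) t ht (i + ((u % t : ℕ) : Fin (m+1)))
      rw [add_assoc] at h2
      have h3 : ((u % t : ℕ) : Fin (m+1)) + ((u / t * t : ℕ) : Fin (m+1))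
          = ((u : ℕ) : Fin (m+1)) := by
        rw [← Nat.cast_add, h1]
      rw [h3, hu i] at h2
      exact h2.symm
    have hgcd : ∀ t u, P t → P u → P (Nat.gcd t u) := by
      intro t u
      induction t, u using Nat.gcd.induction with
      | H0 u => intro _ hu; simpa using hu
      | H1 t u ht ihtu =>
        intro hPt hPu
        rw [Nat.gcd_rec]
        exact ihtu (hPmod _ _ hPt hPu) hPt
    set d := Nat.gcd j (m+1) with hd
    have hPd : P d := hgcd j (m+1) hPj hPK
    have hddvd : d ∣ m + 1 := Nat.gcd_dvd_right _ _
    have hd0 : 0 < d := Nat.gcd_pos_of_pos_left _ hj0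
    have hdle : d ≤ j := Nat.le_of_dvd hj0 (Nat.gcd_dvd_left _ _)
    set M := (m+1) / d with hM
    have hdM : M * d = m + 1 := Nat.div_mul_cancel hddvd
    have hM2 : 2 ≤ M := by
      rcases Nat.lt_or_ge M 2 with h | h
      · interval_cases M <;> omega
      · exact h
    -- the sum decomposition
    have hsum1 : ∑ i : Fin (m+1), c i = ∑ t ∈ Finset.range (m+1), c ((t : Fin (m+1))) := by
      rw [← Fin.sum_univ_eq_sum_range (fun t => c ((t : Fin (m+1)))) (m+1)]
      simp [Fin.cast_val_eq_self]
    have hdecomp : ∀ (N : ℕ), ∑ t ∈ Finset.range (N * d), c ((t : Fin (m+1)))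
        = ∑ q ∈ Finset.range N, ∑ r ∈ Finset.range d, c (((q * d + r : ℕ) : Fin (m+1))) := by
      intro N
      induction N with
      | zero => simp
      | succ N ihN =>
        rw [Finset.sum_range_succ, ← ihN, Nat.succ_mul, Finset.sum_range_add]
    have hconst : ∀ q r : ℕ, c (((q * d + r : ℕ) : Fin (m+1))) = c ((r : Fin (m+1))) := by
      intro q r
      have h1 : ((q * d + r : ℕ) : Fin (m+1)) = (r : Fin (m+1)) + ((q * d : ℕ) : Fin (m+1)) := by
        push_cast; ring
      rw [h1, hPmul q d hPd]
    have hfinal : n = M * ∑ r ∈ Finset.range d, c ((r : Fin (m+1))) := by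
      have h := hdecomp M
      rw [hdM] at h
      rw [← hcn, hsum1, h]
      rw [Finset.sum_congr rfl (fun q _ => Finset.sum_congr rfl (fun r _ => hconst q r))]
      rw [Finset.sum_const, Finset.card_range, smul_eq_mul]
    have hMdvd : M ∣ n := ⟨_, hfinal⟩
    have hMlt : M < n := lt_of_le_of_lt (hdM ▸ Nat.le_mul_of_pos_right M hd0) hkltn
    rcases (hn.eq_one_or_self_of_dvd M hMdvd) with h | h <;> omega
  have := free_dvd (m+1) (by omega) e (fun c => ∏ i, a (c i)) s hes hf hord hfree
  simpa [compositae, hs] using this
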